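/- Let a > b > 0. Let D₁ be the uniform probability measure on [−2a,−a] ∪ [a,2a]; for x₀ ∈ [a+b/2, 2a−b/2] let D₂(x₀) be the uniform probability measure on [−x₀−b/2, −x₀+b/2] ∪ [x₀−b/2, x₀+b/2]; and for x₀' ∈ [a+b, 2a−b] let D₃(x₀') be the uniform probability measure on [x₀'−b, x₀'+b]. Then for every x₀' ∈ [a+b, 2a−b] and every x₀ ∈ [a+b/2, 2a−b/2], W₁(D₁, D₃(x₀')) > W₁(D₁, D₂(x₀)); equivalently, the minimum over x₀' of W₁(D₁, D₃(x₀')) is strictly greater than the maximum over x₀ of W₁(D₁, D₂(x₀)). Here W₁(μ,ν) denotes the infimum, over all probability measures γ on ℝ × ℝ whose first marginal is μ and second marginal is ν, of ∫ |x−y| dγ(x,y). -/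

import Mathlib

open MeasureTheory

/-- A coupling of `(μ, ν)`: a probability measure on the product whose first marginal
is `μ` and whose second marginal is `ν`. -/
def IsCoupling (γ : Measure (ℝ × ℝ)) (μ ν : Measure ℝ) : Prop :=
  IsProbabilityMeasure γ ∧ γ.map Prod.fst = μ ∧ γ.map Prod.snd = ν

/-- Wasserstein-1 distance on ℝ: the infimum over all couplings `γ` of `(μ, ν)` of
`∫ |x − y| dγ(x, y)`. -/
noncomputable def W1 (μ ν : Measure ℝ) : ℝ :=
  sInf {r : ℝ | ∃ γ : Measure (ℝ × ℝ), IsCoupling γ μ ν ∧ r = ∫ p, |p.1 - p.2| ∂γ}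

/-- The uniform probability measure on `[−2a, −a] ∪ [a, 2a]`. -/
noncomputable def D₁ (a : ℝ) : Measure ℝ :=
  ENNReal.ofReal (1 / (2 * a)) •
    (volume.restrict (Set.Icc (-(2 * a)) (-a) ∪ Set.Icc a (2 * a)))

/-- The uniform probability measure on `[−x₀−b/2, −x₀+b/2] ∪ [x₀−b/2, x₀+b/2]`. -/
noncomputable def D₂ (x₀ b : ℝ) : Measure ℝ :=
  ENNReal.ofReal (1 / (2 * b)) •
    (volume.restrict
      (Set.Icc (-x₀ - b / 2) (-x₀ + b / 2) ∪ Set.Icc (x₀ - b / 2) (x₀ + b / 2)))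

/-- The uniform probability measure on `[x₀ − b, x₀ + b]`. -/
noncomputable def D₃ (x₀ b : ℝ) : Measure ℝ :=
  ENNReal.ofReal (1 / (2 * b)) • (volume.restrict (Set.Icc (x₀ - b) (x₀ + b)))

/-- Pushforward of restricted Lebesgue under an increasing affine map. -/
lemma map_affine_restrict (m c l u : ℝ) (hm : 0 < m) :
    (volume.restrict (Set.Icc l u)).map (fun x => m * x + c) =
      ENNReal.ofReal (1 / m) • volume.restrict (Set.Icc (m * l + c) (m * u + c)) := by
  have hemb : MeasurableEmbedding (fun x : ℝ => m * x + c) :=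
    (affineHomeomorph m c hm.ne').measurableEmbedding
  have hpre : (fun x : ℝ => m * x + c) ⁻¹' Set.Icc (m * l + c) (m * u + c) = Set.Icc l u := by
    ext x
    simp only [Set.mem_preimage, Set.mem_Icc]
    constructor
    · rintro ⟨h1, h2⟩
      constructor <;> nlinarith
    · rintro ⟨h1, h2⟩
      constructor <;> nlinarith
  have hmap : Measure.map (fun x : ℝ => m * x + c) volume
      = ENNReal.ofReal (1 / m) • volume := by
    have h1 : (fun x : ℝ => m * x + c) = (· + c) ∘ (m * ·) := rfl
    rw [h1, ← Measure.map_map (measurable_add_const c) (measurable_const_mul m),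
      Real.map_volume_mul_left hm.ne', Measure.map_smul, map_add_right_eq_self volume c,
      abs_of_pos (inv_pos.2 hm), one_div]
  rw [← hpre, ← hemb.restrict_map, hmap, Measure.restrict_smul]

lemma setIntegral_id_Icc (l u : ℝ) (h : l ≤ u) :
    ∫ x in Set.Icc l u, x = (u ^ 2 - l ^ 2) / 2 := by
  rw [MeasureTheory.integral_Icc_eq_integral_Ioc, ← intervalIntegral.integral_of_le h,
    _root_.integral_id]

lemma integrableOn_id_Icc (l u : ℝ) : IntegrableOn (fun x : ℝ => x) (Set.Icc l u) volume :=
  continuous_id.integrableOn_Icc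

lemma disj_D1 (a : ℝ) (ha : 0 < a) :
    Disjoint (Set.Icc (-(2 * a)) (-a)) (Set.Icc a (2 * a)) := by
  rw [Set.disjoint_left]
  rintro x ⟨h1, h2⟩ ⟨h3, h4⟩
  linarith

lemma isProb_D1 (a : ℝ) (ha : 0 < a) : IsProbabilityMeasure (D₁ a) := by
  constructor
  rw [D₁, Measure.smul_apply, Measure.restrict_apply_univ,
    measure_union (disj_D1 a ha) measurableSet_Icc, Real.volume_Icc, Real.volume_Icc,
    ← ENNReal.ofReal_add (by linarith) (by linarith), smul_eq_mul,
    ← ENNReal.ofReal_mul (by positivity)]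
  rw [show 1 / (2 * a) * (-a - -(2 * a) + (2 * a - a)) = 1 by field_simp; ring]
  exact ENNReal.ofReal_one

lemma isProb_D3 (x b : ℝ) (hb : 0 < b) : IsProbabilityMeasure (D₃ x b) := by
  constructor
  rw [D₃, Measure.smul_apply, Measure.restrict_apply_univ, Real.volume_Icc, smul_eq_mul,
    ← ENNReal.ofReal_mul (by positivity)]
  rw [show 1 / (2 * b) * (x + b - (x - b)) = 1 by field_simp; ring]
  exact ENNReal.ofReal_one

lemma mean_D1 (a : ℝ) (ha : 0 < a) : ∫ x : ℝ, x ∂(D₁ a) = 0 := by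
  rw [D₁, integral_smul_measure,
    setIntegral_union (disj_D1 a ha) measurableSet_Icc
      (integrableOn_id_Icc _ _) (integrableOn_id_Icc _ _),
    setIntegral_id_Icc _ _ (by linarith), setIntegral_id_Icc _ _ (by linarith)]
  simp only [smul_eq_mul]
  ring

lemma mean_D3 (x b : ℝ) (hb : 0 < b) : ∫ y : ℝ, y ∂(D₃ x b) = x := by
  rw [D₃, integral_smul_measure, setIntegral_id_Icc _ _ (by linarith),
    ENNReal.toReal_ofReal (by positivity)]
  field_simp
  ring
  exact mul_inv_cancel_right₀ hb.ne' x

lemma integrable_id_D1 (a : ℝ) (ha : 0 < a) : Integrable (fun x : ℝ => x) (D₁ a) := by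
  rw [D₁]
  exact (((integrableOn_id_Icc (-(2*a)) (-a)).union (integrableOn_id_Icc a (2*a)))).smul_measure
    ENNReal.ofReal_ne_top

lemma integrable_id_D3 (x b : ℝ) (hb : 0 < b) : Integrable (fun y : ℝ => y) (D₃ x b) := by
  rw [D₃]
  exact (integrableOn_id_Icc _ _).smul_measure ENNReal.ofReal_ne_top

lemma W1_lower (a b x' : ℝ) (hb : 0 < b) (hab : b < a)
    (hx : x' ∈ Set.Icc (a + b) (2 * a - b)) :
    a + b ≤ W1 (D₁ a) (D₃ x' b) := by
  have ha : 0 < a := hb.trans hab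
  have hP1 : IsProbabilityMeasure (D₁ a) := isProb_D1 a ha
  have hP3 : IsProbabilityMeasure (D₃ x' b) := isProb_D3 x' b hb
  apply le_csInf
  · refine ⟨∫ p, |p.1 - p.2| ∂((D₁ a).prod (D₃ x' b)), (D₁ a).prod (D₃ x' b), ⟨?_, ?_, ?_⟩, rfl⟩
    · infer_instance
    · rw [Measure.map_fst_prod, measure_univ, one_smul]
    · rw [Measure.map_snd_prod, measure_univ, one_smul]
  · rintro r ⟨γ, ⟨hγp, hfst, hsnd⟩, rfl⟩
    have h1 : Integrable (fun p : ℝ × ℝ => p.1) γ := by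
      have := (integrable_map_measure (g := fun x : ℝ => x) (f := Prod.fst)
        (by rw [hfst]; exact aestronglyMeasurable_id) measurable_fst.aemeasurable).mp
      rw [hfst] at this
      exact this (integrable_id_D1 a ha)
    have h2 : Integrable (fun p : ℝ × ℝ => p.2) γ := by
      have := (integrable_map_measure (g := fun x : ℝ => x) (f := Prod.snd)
        (by rw [hsnd]; exact aestronglyMeasurable_id) measurable_snd.aemeasurable).mp
      rw [hsnd] at this
      exact this (integrable_id_D3 x' b hb)
    have e1 : ∫ p, (p.1 : ℝ) ∂γ = 0 := by
      rw [← integral_map measurable_fst.aemeasurable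
        (f := fun x : ℝ => x) (by rw [hfst]; exact aestronglyMeasurable_id), hfst]
      exact mean_D1 a ha
    have e2 : ∫ p, (p.2 : ℝ) ∂γ = x' := by
      rw [← integral_map measurable_snd.aemeasurable
        (f := fun x : ℝ => x) (by rw [hsnd]; exact aestronglyMeasurable_id), hsnd]
      exact mean_D3 x' b hb
    have key : |∫ p, (p.1 - p.2 : ℝ) ∂γ| ≤ ∫ p, |p.1 - p.2| ∂γ := by
      simpa [Real.norm_eq_abs] using
        norm_integral_le_integral_norm (μ := γ) (fun p : ℝ × ℝ => p.1 - p.2)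
    rw [integral_sub h1 h2, e1, e2, zero_sub, abs_neg] at key
    have hx1 := hx.1
    calc a + b ≤ x' := hx1
    _ ≤ |x'| := le_abs_self x'
    _ ≤ _ := key

lemma W1_upper (a b x₀ : ℝ) (hb : 0 < b) (hab : b < a)
    (hx : x₀ ∈ Set.Icc (a + b / 2) (2 * a - b / 2)) :
    W1 (D₁ a) (D₂ x₀ b) ≤ a - b := by
  have ha : 0 < a := hb.trans hab
  set m : ℝ := b / a with hm_def
  have hm : 0 < m := div_pos hb ha
  have hma : m * a = b := div_mul_cancel₀ b ha.ne'
  have hm1 : m ≤ 1 := (div_le_one ha).mpr hab.le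
  set cL : ℝ := -x₀ + 3 * b / 2 with hcL
  set cR : ℝ := x₀ - 3 * b / 2 with hcR
  set TL : ℝ → ℝ := fun x => m * x + cL with hTL
  set TR : ℝ → ℝ := fun x => m * x + cR with hTR
  set gL : ℝ → ℝ × ℝ := fun x => (x, TL x) with hgL
  set gR : ℝ → ℝ × ℝ := fun x => (x, TR x) with hgR
  have mTL : Measurable TL := by fun_prop
  have mTR : Measurable TR := by fun_prop
  have mgL : Measurable gL := measurable_id.prodMk mTL
  have mgR : Measurable gR := measurable_id.prodMk mTR
  set A : Set ℝ := Set.Icc (-(2 * a)) (-a) with hA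
  set B : Set ℝ := Set.Icc a (2 * a) with hB
  set cA : ENNReal := ENNReal.ofReal (1 / (2 * a)) with hcA
  set γ : Measure (ℝ × ℝ) :=
    cA • ((volume.restrict A).map gL) + cA • ((volume.restrict B).map gR) with hγ
  -- first marginal
  have hfst : γ.map Prod.fst = D₁ a := by
    have e1 : Prod.fst ∘ gL = id := rfl
    have e2 : Prod.fst ∘ gR = id := rfl
    rw [hγ, Measure.map_add _ _ measurable_fst, Measure.map_smul, Measure.map_smul,
      Measure.map_map measurable_fst mgL, Measure.map_map measurable_fst mgR, e1, e2,
      Measure.map_id, Measure.map_id, D₁, ← smul_add,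
      ← Measure.restrict_union (disj_D1 a ha) measurableSet_Icc]
  -- second marginal
  have hsndL : (volume.restrict A).map TL =
      ENNReal.ofReal (1 / m) • volume.restrict (Set.Icc (-x₀ - b / 2) (-x₀ + b / 2)) := by
    have := map_affine_restrict m cL (-(2 * a)) (-a) hm
    rw [show m * (-(2 * a)) + cL = -x₀ - b / 2 by rw [hcL]; nlinarith [hma],
      show m * (-a) + cL = -x₀ + b / 2 by rw [hcL]; nlinarith [hma]] at this
    exact this
  have hsndR : (volume.restrict B).map TR =
      ENNReal.ofReal (1 / m) • volume.restrict (Set.Icc (x₀ - b / 2) (x₀ + b / 2)) := by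
    have := map_affine_restrict m cR a (2 * a) hm
    rw [show m * a + cR = x₀ - b / 2 by rw [hcR]; nlinarith [hma],
      show m * (2 * a) + cR = x₀ + b / 2 by rw [hcR]; nlinarith [hma]] at this
    exact this
  have hcoef : cA * ENNReal.ofReal (1 / m) = ENNReal.ofReal (1 / (2 * b)) := by
    rw [hcA, ← ENNReal.ofReal_mul (by positivity)]
    congr 1
    rw [hm_def]
    field_simp
  have hsnd : γ.map Prod.snd = D₂ x₀ b := by
    have e1 : Prod.snd ∘ gL = TL := rfl
    have e2 : Prod.snd ∘ gR = TR := rfl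
    rw [hγ, Measure.map_add _ _ measurable_snd, Measure.map_smul, Measure.map_smul,
      Measure.map_map measurable_snd mgL, Measure.map_map measurable_snd mgR, e1, e2,
      hsndL, hsndR, smul_smul, smul_smul, hcoef, D₂, ← smul_add,
      ← Measure.restrict_union ?_ measurableSet_Icc]
    · rw [Set.disjoint_left]
      rintro x ⟨h1, h2⟩ ⟨h3, h4⟩
      have := hx.1
      linarith
  -- probability
  have hprob : IsProbabilityMeasure γ := by
    constructor
    have : γ.map Prod.fst Set.univ = γ Set.univ := by
      rw [Measure.map_apply measurable_fst MeasurableSet.univ, Set.preimage_univ]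
    rw [← this, hfst]
    exact (isProb_D1 a ha).measure_univ
  -- cost
  set f : ℝ × ℝ → ℝ := fun p => |p.1 - p.2| with hf
  have hfc : Continuous f := (continuous_fst.sub continuous_snd).abs
  have cTL : Continuous TL := (continuous_const.mul continuous_id).add continuous_const
  have cTR : Continuous TR := (continuous_const.mul continuous_id).add continuous_const
  have cgL : Continuous gL := continuous_id.prodMk cTL
  have cgR : Continuous gR := continuous_id.prodMk cTR
  have hIL : Integrable f (cA • (volume.restrict A).map gL) := by
    refine Integrable.smul_measure ?_ ENNReal.ofReal_ne_top
    rw [integrable_map_measure hfc.aestronglyMeasurable mgL.aemeasurable]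
    exact (hfc.comp cgL).integrableOn_Icc
  have hIR : Integrable f (cA • (volume.restrict B).map gR) := by
    refine Integrable.smul_measure ?_ ENNReal.ofReal_ne_top
    rw [integrable_map_measure hfc.aestronglyMeasurable mgR.aemeasurable]
    exact (hfc.comp cgR).integrableOn_Icc
  -- pointwise bounds
  have hx1 := hx.1
  have hx2 := hx.2
  have hbL : ∀ x ∈ A, f (gL x) ≤ a - b := by
    intro x hxA
    have h1 := hxA.1
    have h2 := hxA.2
    have hTLx : f (gL x) = |x - (m * x + cL)| := rfl
    rw [hTLx, hcL, abs_le]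
    constructor
    · nlinarith [hma, mul_nonneg (show (0:ℝ) ≤ x + 2 * a by linarith)
        (show (0:ℝ) ≤ 1 - m by linarith)]
    · nlinarith [hma, mul_nonneg (show (0:ℝ) ≤ -a - x by linarith)
        (show (0:ℝ) ≤ 1 - m by linarith)]
  have hbR : ∀ x ∈ B, f (gR x) ≤ a - b := by
    intro x hxB
    have h1 := hxB.1
    have h2 := hxB.2
    have hTRx : f (gR x) = |x - (m * x + cR)| := rfl
    rw [hTRx, hcR, abs_le]
    constructor
    · nlinarith [hma, mul_nonneg (show (0:ℝ) ≤ x - a by linarith)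
        (show (0:ℝ) ≤ 1 - m by linarith)]
    · nlinarith [hma, mul_nonneg (show (0:ℝ) ≤ 2 * a - x by linarith)
        (show (0:ℝ) ≤ 1 - m by linarith)]
  have hvolA : (volume A).toReal = a := by
    rw [hA, Real.volume_Icc, ENNReal.toReal_ofReal (by linarith)]
    ring
  have hvolB : (volume B).toReal = a := by
    rw [hB, Real.volume_Icc, ENNReal.toReal_ofReal (by linarith)]
    ring
  have hIntL : ∫ x in A, f (gL x) ≤ (a - b) * a := by
    have hmono := setIntegral_mono_on (μ := volume) (s := A)
      (f := fun x => f (gL x)) (g := fun _ => a - b) ((hfc.comp cgL).integrableOn_Icc)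
      (integrableOn_const (C := a - b) measure_Icc_lt_top.ne enorm_ne_top) measurableSet_Icc hbL
    rw [setIntegral_const, measureReal_def, hvolA, smul_eq_mul] at hmono
    linarith
  have hIntR : ∫ x in B, f (gR x) ≤ (a - b) * a := by
    have hmono := setIntegral_mono_on (μ := volume) (s := B)
      (f := fun x => f (gR x)) (g := fun _ => a - b) ((hfc.comp cgR).integrableOn_Icc)
      (integrableOn_const (C := a - b) measure_Icc_lt_top.ne enorm_ne_top) measurableSet_Icc hbR
    rw [setIntegral_const, measureReal_def, hvolB, smul_eq_mul] at hmono
    linarith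
  have hcAreal : cA.toReal = 1 / (2 * a) := ENNReal.toReal_ofReal (by positivity)
  have hcost : ∫ p, f p ∂γ ≤ a - b := by
    rw [hγ, integral_add_measure hIL hIR, integral_smul_measure, integral_smul_measure,
      integral_map mgL.aemeasurable hfc.aestronglyMeasurable,
      integral_map mgR.aemeasurable hfc.aestronglyMeasurable, hcAreal, smul_eq_mul, smul_eq_mul]
    have hpos : (0:ℝ) ≤ 1 / (2 * a) := by positivity
    have e1 := mul_le_mul_of_nonneg_left hIntL hpos
    have e2 := mul_le_mul_of_nonneg_left hIntR hpos
    have : 1 / (2 * a) * ((a - b) * a) + 1 / (2 * a) * ((a - b) * a) = a - b := by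
      field_simp
      ring
    linarith
  have hbdd : BddBelow {r : ℝ | ∃ γ' : Measure (ℝ × ℝ),
      IsCoupling γ' (D₁ a) (D₂ x₀ b) ∧ r = ∫ p, |p.1 - p.2| ∂γ'} := by
    refine ⟨0, ?_⟩
    rintro r ⟨γ', _, rfl⟩
    exact integral_nonneg fun p => abs_nonneg _
  have hmem : (∫ p, f p ∂γ) ∈ {r : ℝ | ∃ γ' : Measure (ℝ × ℝ),
      IsCoupling γ' (D₁ a) (D₂ x₀ b) ∧ r = ∫ p, |p.1 - p.2| ∂γ'} :=
    ⟨γ, ⟨hprob, hfst, hsnd⟩, rfl⟩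
  exact (csInf_le hbdd hmem).trans hcost

theorem stmt_7 (a b : ℝ) (hb : 0 < b) (hab : b < a) :
    ∀ x₀' ∈ Set.Icc (a + b) (2 * a - b),
      ∀ x₀ ∈ Set.Icc (a + b / 2) (2 * a - b / 2),
        W1 (D₁ a) (D₂ x₀ b) < W1 (D₁ a) (D₃ x₀' b) := by
  intro x₀' hx' x₀ hx₀
  calc W1 (D₁ a) (D₂ x₀ b) ≤ a - b := W1_upper a b x₀ hb hab hx₀
  _ < a + b := by linarith
  _ ≤ W1 (D₁ a) (D₃ x₀' b) := W1_lower a b x₀' hb hab hx'
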